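/- Content of Theorems 1 and 2: for all integers a, b ≥ 1, every sequence c : ℕ → ℚ, and all n ≥ 1 and k ≥ 2, the quantity q_c(n,k) satisfies the convolution recurrence 2(k−1)·q_c(n,k) = (an + (b−2)k + 2)·∑_{ℓ=1}^{k−1} ∑_{m=ℓ}^{n−1} q_c(n−m, k−ℓ)·q_c(m, ℓ), where an + (b−2)k + 2 is computed in ℚ. (Together with the initial condition q_c(n,1) = c_n, this recurrence characterizes the number of colored partitions of a convex (an+(b−2)k+2)-gon by k−1 noncrossing diagonals into k polygons each with number of sides ≡ b (mod a), each (aj+b)-gon colorable in c_j ways.) -/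

import Mathlib

open Finset

def comps (n k : ℕ) : Finset (Fin k → ℕ) :=
  (Finset.Nat.antidiagonalTuple k n).filter (fun f => ∀ i, 0 < f i)

lemma mem_comps {n k : ℕ} {f : Fin k → ℕ} :
    f ∈ comps n k ↔ (∑ i, f i = n ∧ ∀ i, 0 < f i) := by
  simp [comps, Finset.Nat.mem_antidiagonalTuple]

/-- Weighted composition sum `P_c(n,k) = ∑ c_{m_1}⋯c_{m_k}` over compositions of `n`
into `k` positive parts; equals `(k!/n!)·B_{n,k}(1!c_1, 2!c_2, …)`. -/
def Pc (c : ℕ → ℚ) (n k : ℕ) : ℚ :=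
  ∑ f ∈ (Finset.Nat.antidiagonalTuple k n).filter (fun f => ∀ i, 0 < f i),
    ∏ i, c (f i)

/-- `q_c(n,k) = (1/(an+(b-1)k+1))·C(an+(b-1)k+1, k)·P_c(n,k)`. -/
def qc (a b : ℕ) (c : ℕ → ℚ) (n k : ℕ) : ℚ :=
  (1 / ((a * n + (b - 1) * k + 1 : ℕ) : ℚ)) *
    (((a * n + (b - 1) * k + 1).choose k : ℕ) : ℚ) * Pc c n k

lemma Pc_def (c : ℕ → ℚ) (n k : ℕ) : Pc c n k = ∑ f ∈ comps n k, ∏ i, c (f i) := rfl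

lemma Pc_zero (c : ℕ → ℚ) (n : ℕ) : Pc c n 0 = if n = 0 then 1 else 0 := by
  rcases Nat.eq_zero_or_pos n with h | h
  · subst h
    rw [Pc_def, if_pos rfl]
    have : comps 0 0 = {![]} := by
      ext f
      simp [mem_comps]
      exact funext fun i => absurd i.2 (by omega)
    simp [this]
  · rw [Pc_def, if_neg (by omega)]
    have : comps n 0 = ∅ := by
      ext f; simp [mem_comps]; omega
    simp [this]

lemma Pc_eq_zero (c : ℕ → ℚ) {n k : ℕ} (h : n < k) : Pc c n k = 0 := by
  rw [Pc_def]
  have : comps n k = ∅ := by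
    ext f
    simp only [mem_comps, Finset.notMem_empty, iff_false, not_and]
    intro hs hp
    have hle : k ≤ n := by
      calc k = ∑ _i : Fin k, 1 := by simp
        _ ≤ ∑ i, f i := Finset.sum_le_sum (fun i _ => hp i)
        _ = n := hs
    omega
  simp [this]

lemma Pc_one (c : ℕ → ℚ) {n : ℕ} (hn : 1 ≤ n) : Pc c n 1 = c n := by
  rw [Pc_def]
  have : comps n 1 = {![n]} := by
    ext f
    simp only [mem_comps, Finset.mem_singleton]
    constructor
    · rintro ⟨hs, _⟩
      ext i
      fin_cases i
      simpa using hs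
    · rintro rfl
      constructor
      · simp
      · intro i; fin_cases i; simpa using (show 0 < n by omega)
  simp [this]

lemma Pc_split (c : ℕ → ℚ) (g : ℕ → ℚ) (n k : ℕ) :
    ∑ f ∈ comps n (k+1), g (f 0) * ∏ i, c (f i)
    = ∑ j ∈ Icc 1 n, g j * (c j * Pc c (n-j) k) := by
  have : ∀ j ∈ Icc 1 n, g j * (c j * Pc c (n-j) k)
      = ∑ h ∈ comps (n-j) k, g j * (c j * ∏ i, c (h i)) := by
    intro j _
    rw [Pc_def, Finset.mul_sum, Finset.mul_sum]
  rw [Finset.sum_congr rfl this, Finset.sum_sigma']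
  refine Finset.sum_nbij' (fun f => ⟨f 0, Fin.tail f⟩) (fun p => Fin.cons p.1 p.2)
    ?_ ?_ ?_ ?_ ?_
  · intro f hf
    rw [mem_comps] at hf
    obtain ⟨hsum, hpos⟩ := hf
    have h0 : f 0 ≤ n := by
      rw [← hsum]
      exact Finset.single_le_sum (fun i _ => Nat.zero_le (f i)) (Finset.mem_univ 0)
    simp only [Finset.mem_sigma, Finset.mem_Icc, mem_comps]
    refine ⟨⟨hpos 0, h0⟩, ?_, fun i => hpos i.succ⟩
    have hsum' : f 0 + ∑ i : Fin k, f i.succ = n := by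
      rw [← Fin.sum_univ_succ]; exact hsum
    have htl : (∑ i : Fin k, Fin.tail f i) = ∑ i : Fin k, f i.succ := rfl
    omega
  · rintro ⟨j, h⟩ hm
    simp only [Finset.mem_sigma, Finset.mem_Icc, mem_comps] at hm
    obtain ⟨⟨hj1, hjn⟩, hsum, hpos⟩ := hm
    rw [mem_comps]
    constructor
    · dsimp only
      rw [Fin.sum_cons, hsum]; omega
    · intro i
      refine Fin.cases ?_ ?_ i
      · simpa using (show 0 < j by omega)
      · intro i'; simpa using hpos i'
  · intro f _
    simp [Fin.cons_self_tail]
  · rintro ⟨j, h⟩ _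
    simp [Fin.tail_cons]
  · intro f _
    rw [Fin.prod_univ_succ]
    rfl

lemma Pc_coord (c : ℕ → ℚ) (n k : ℕ) (i : Fin (k+1)) :
    ∑ f ∈ comps n (k+1), ((f i : ℚ)) * ∏ j, c (f j)
    = ∑ f ∈ comps n (k+1), ((f 0 : ℚ)) * ∏ j, c (f j) := by
  refine Finset.sum_nbij' (fun f => f ∘ (Equiv.swap 0 i)) (fun f => f ∘ (Equiv.swap 0 i))
    ?_ ?_ ?_ ?_ ?_
  · intro f hf
    rw [mem_comps] at hf ⊢
    refine ⟨?_, fun j => hf.2 _⟩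
    show ∑ j, f (Equiv.swap 0 i j) = n
    rw [Equiv.sum_comp (Equiv.swap 0 i) f]; exact hf.1
  · intro f hf
    rw [mem_comps] at hf ⊢
    refine ⟨?_, fun j => hf.2 _⟩
    show ∑ j, f (Equiv.swap 0 i j) = n
    rw [Equiv.sum_comp (Equiv.swap 0 i) f]; exact hf.1
  · intro f _; funext j; simp [Function.comp, Equiv.swap_apply_self]
  · intro f _; funext j; simp [Function.comp, Equiv.swap_apply_self]
  · intro f _
    show ((f i : ℚ)) * ∏ j, c (f j) = ((f (Equiv.swap 0 i 0) : ℚ)) * ∏ j, c (f (Equiv.swap 0 i j))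
    rw [Equiv.swap_apply_left, Equiv.prod_comp (Equiv.swap 0 i) (fun j => c (f j))]

lemma Pc_split_one (c : ℕ → ℚ) (n k : ℕ) :
    Pc c n (k+1) = ∑ j ∈ Icc 1 n, c j * Pc c (n-j) k := by
  have h := Pc_split c (fun _ => 1) n k
  simpa [Pc_def] using h

lemma Pc_moment (c : ℕ → ℚ) (n k : ℕ) :
    ((k:ℚ)+1) * ∑ j ∈ Icc 1 n, (j:ℚ) * (c j * Pc c (n-j) k) = (n:ℚ) * Pc c n (k+1) := by
  rw [← Pc_split c (fun j => (j:ℚ)) n k]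
  have h2 : ∑ i : Fin (k+1), ∑ f ∈ comps n (k+1), ((f i : ℚ)) * ∏ j, c (f j)
      = ((k:ℚ)+1) * ∑ f ∈ comps n (k+1), ((f 0 : ℚ)) * ∏ j, c (f j) := by
    rw [Finset.sum_congr rfl (fun i _ => Pc_coord c n k i), Finset.sum_const]
    simp [mul_comm]
  rw [← h2, Finset.sum_comm]
  rw [Pc_def, Finset.mul_sum]
  refine Finset.sum_congr rfl (fun f hf => ?_)
  rw [mem_comps] at hf
  rw [← Finset.sum_mul]
  congr 1
  rw [← Nat.cast_sum, hf.1]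

noncomputable def Rr (a b : ℕ) (c : ℕ → ℚ) (r n k : ℕ) : ℚ :=
  if k = 0 then Pc c n 0
  else ((r : ℚ) / k) * (((a*n + (b-1)*k + r - 1).choose (k-1) : ℕ) : ℚ) * Pc c n k

lemma Rr_k0 (a b : ℕ) (c : ℕ → ℚ) (r n : ℕ) : Rr a b c r n 0 = if n = 0 then 1 else 0 := by
  rw [Rr, if_pos rfl, Pc_zero]

lemma Rr_r0 (a b : ℕ) (c : ℕ → ℚ) (n k : ℕ) (hk : k ≠ 0) : Rr a b c 0 n k = 0 := by
  rw [Rr, if_neg hk]; simp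

lemma Rr_rec (a b : ℕ) (ha : 1 ≤ a) (hb : 1 ≤ b) (c : ℕ → ℚ) (r n k : ℕ) :
    Rr a b c (r+1) n (k+1) = Rr a b c r n (k+1)
      + ∑ j ∈ Icc 1 n, c j * Rr a b c (r + (b-1) + a*j) (n-j) k := by
  match k with
  | 0 =>
    -- k+1 = 1
    rcases Nat.eq_zero_or_pos n with hn | hn
    · subst hn
      simp [Rr, Pc_eq_zero c (show (0:ℕ) < 1 by norm_num)]
    · have h1 : ∀ r' : ℕ, Rr a b c r' n 1 = (r' : ℚ) * c n := by
        intro r'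
        rw [Rr, if_neg one_ne_zero, Pc_one c hn]
        simp
      rw [h1, h1]
      have h2 : ∑ j ∈ Icc 1 n, c j * Rr a b c (r + (b-1) + a*j) (n-j) 0 = c n := by
        rw [Finset.sum_eq_single_of_mem n (Finset.mem_Icc.mpr ⟨hn, le_refl n⟩)]
        · rw [Rr_k0]; simp
        · intro j hj hne
          rw [Rr_k0, if_neg (by simp at hj; omega)]
          ring
      rw [h2]
      push_cast; ring
  | m + 1 =>
    rcases Nat.lt_or_ge n (m+2) with hn | hn
    · -- everything vanishes
      have hP : Pc c n (m+2) = 0 := Pc_eq_zero c hn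
      have hterm : ∀ j ∈ Icc 1 n, c j * Rr a b c (r + (b-1) + a*j) (n-j) (m+1) = 0 := by
        intro j hj
        simp only [Finset.mem_Icc] at hj
        rw [Rr, if_neg (Nat.succ_ne_zero m), Pc_eq_zero c (show n - j < m+1 by omega)]
        ring
      rw [Finset.sum_congr rfl hterm, Finset.sum_const, smul_zero]
      rw [Rr, Rr, if_neg (Nat.succ_ne_zero (m+1)), if_neg (Nat.succ_ne_zero (m+1)), hP]
      ring
    · -- main case
      set Y : ℕ := a*n + (b-1)*(m+2) + r - 1 with hYdef
      have hn1 : 1 ≤ n := by omega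
      have han : 1*n ≤ a*n := Nat.mul_le_mul_right n ha
      have hY1 : a*n + (b-1)*(m+2) + (r+1) - 1 = Y + 1 := by omega
      have hY0 : a*n + (b-1)*(m+2) + r - 1 = Y := rfl
      have hYm : m + 1 ≤ Y := by omega
      -- per-term rewrite of the sum
      have hterm : ∀ j ∈ Icc 1 n, c j * Rr a b c (r + (b-1) + a*j) (n-j) (m+1)
          = ((Y.choose m : ℚ)/((m:ℚ)+1)) *
              ( ((r:ℚ)+(b:ℚ)-1) * (c j * Pc c (n-j) (m+1))
                + (a:ℚ) * ((j:ℚ) * (c j * Pc c (n-j) (m+1))) ) := by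
        intro j hj
        simp only [Finset.mem_Icc] at hj
        have e1 : a*(n-j) = a*n - a*j := Nat.mul_sub a n j
        have e2 : (b-1)*(m+2) = (b-1)*(m+1) + (b-1) := by ring
        have e3 : a*j ≤ a*n := Nat.mul_le_mul_left a hj.2
        have hE : a*(n-j) + (b-1)*(m+1) + (r + (b-1) + a*j) - 1 = Y := by omega
        rw [Rr, if_neg (Nat.succ_ne_zero m), Nat.add_sub_cancel, hE]
        have hb1 : ((b-1 : ℕ) : ℚ) = (b:ℚ) - 1 := by
          rw [Nat.cast_sub hb]; norm_num
        push_cast [hb1]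
        have hm1 : ((m:ℚ)+1) ≠ 0 := by positivity
        field_simp
        ring
      rw [Finset.sum_congr rfl hterm, ← Finset.mul_sum, Finset.sum_add_distrib,
        ← Finset.mul_sum, ← Finset.mul_sum]
      -- abbreviations
      have hS0 : ∑ j ∈ Icc 1 n, c j * Pc c (n-j) (m+1) = Pc c n (m+2) :=
        (Pc_split_one c n (m+1)).symm
      have hS1 := Pc_moment c n (m+1)
      rw [hS0]
      rw [Rr, Rr, if_neg (Nat.succ_ne_zero (m+1)), if_neg (Nat.succ_ne_zero (m+1))]
      simp only [show m + 1 + 1 = m + 2 from rfl, Nat.add_sub_cancel] at hS1 ⊢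
      rw [hY1, hY0]
      have hPascal : ((Y+1).choose (m+1) : ℚ) = (Y.choose m : ℚ) + (Y.choose (m+1) : ℚ) := by
        rw [Nat.choose_succ_succ]; push_cast; ring
      have hChoose : ((m:ℚ)+1) * (Y.choose (m+1) : ℚ) = ((Y:ℚ) - m) * (Y.choose m : ℚ) := by
        have h := Nat.choose_succ_right_eq Y m
        have h2 : (Y.choose (m+1) : ℚ) * ((m:ℚ)+1) = (Y.choose m : ℚ) * ((Y - m : ℕ) : ℚ) := by
          exact_mod_cast congrArg (Nat.cast : ℕ → ℚ) h
        rw [Nat.cast_sub (by omega)] at h2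
        linarith [h2]
      have hY' : (Y:ℚ) + 1 = (a:ℚ)*n + ((b:ℚ)-1)*((m:ℚ)+2) + r := by
        have h3 : Y + 1 = a*n + (b-1)*(m+2) + r := by omega
        have := congrArg (Nat.cast : ℕ → ℚ) h3
        push_cast [Nat.cast_sub hb] at this
        linarith [this]
      have hm1 : ((m:ℚ)+1) ≠ 0 := by positivity
      have hm2 : ((m:ℚ)+2) ≠ 0 := by positivity
      push_cast at hS1 ⊢
      rw [hPascal]
      set v : ℚ := (Y.choose m : ℚ) with hv
      set u : ℚ := (Y.choose (m+1) : ℚ) with hu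
      set P2 : ℚ := Pc c n (m+2) with hP2
      set SS : ℚ := ∑ j ∈ Icc 1 n, (j:ℚ) * (c j * Pc c (n-j) (m+1)) with hSS
      have key : ((r:ℚ)+1) * (((m:ℚ)+1) * ((v + u) * P2))
          = (r:ℚ) * (((m:ℚ)+1) * (u * P2))
            + ((m:ℚ)+2) * (v * (((r:ℚ) + (b:ℚ) - 1) * P2 + (a:ℚ) * SS)) := by
        linear_combination P2 * hChoose - ((a:ℚ) * v) * hS1 + (v * P2) * hY'
      field_simp
      linear_combination key

lemma tri (n : ℕ) (F : ℕ → ℕ → ℕ → ℚ) :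
    ∑ p ∈ Finset.HasAntidiagonal.antidiagonal n, ∑ j ∈ Icc 1 p.2, F p.1 j (p.2 - j)
    = ∑ j ∈ Icc 1 n, ∑ p ∈ Finset.HasAntidiagonal.antidiagonal (n - j), F p.1 j p.2 := by
  rw [Finset.sum_sigma', Finset.sum_sigma']
  refine Finset.sum_nbij' (fun x => ⟨x.2, (x.1.1, x.1.2 - x.2)⟩)
    (fun x => ⟨(x.2.1, x.2.2 + x.1), x.1⟩) ?_ ?_ ?_ ?_ ?_
  · rintro ⟨⟨p1, p2⟩, j⟩ hx
    simp only [Finset.mem_sigma, Finset.HasAntidiagonal.mem_antidiagonal, Finset.mem_Icc] at hx ⊢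
    omega
  · rintro ⟨j, q1, q2⟩ hx
    simp only [Finset.mem_sigma, Finset.HasAntidiagonal.mem_antidiagonal, Finset.mem_Icc] at hx ⊢
    omega
  · rintro ⟨⟨p1, p2⟩, j⟩ hx
    simp only [Finset.mem_sigma, Finset.HasAntidiagonal.mem_antidiagonal, Finset.mem_Icc] at hx
    have hj : p2 - j + j = p2 := by omega
    dsimp only
    rw [hj]
  · rintro ⟨j, ⟨q1, q2⟩⟩ hx
    simp only [Finset.mem_sigma, Finset.HasAntidiagonal.mem_antidiagonal, Finset.mem_Icc] at hx
    have hj : q2 + j - j = q2 := by omega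
    dsimp only
    rw [hj]
  · rintro ⟨⟨p1, p2⟩, j⟩ _
    rfl

noncomputable def Sq (a b : ℕ) (c : ℕ → ℚ) (r s n k : ℕ) : ℚ :=
  ∑ p ∈ Finset.HasAntidiagonal.antidiagonal k, ∑ q ∈ Finset.HasAntidiagonal.antidiagonal n,
    Rr a b c r q.1 p.1 * Rr a b c s q.2 p.2

lemma sum_delta_right (n : ℕ) (G : ℕ → ℚ) :
    ∑ q ∈ Finset.HasAntidiagonal.antidiagonal n, G q.1 * (if q.2 = 0 then (1:ℚ) else 0) = G n := by
  rw [Finset.sum_eq_single (n, 0)]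
  · simp
  · rintro ⟨q1, q2⟩ hq hne
    simp only [Finset.HasAntidiagonal.mem_antidiagonal] at hq
    have hq2 : q2 ≠ 0 := by
      intro h
      apply hne
      have h1 : q1 = n := by omega
      simp [h1, h]
    rw [if_neg hq2]; ring
  · intro h
    exact absurd (Finset.HasAntidiagonal.mem_antidiagonal.mpr (by simp)) h

lemma Sq_eq (a b : ℕ) (ha : 1 ≤ a) (hb : 1 ≤ b) (c : ℕ → ℚ) (r : ℕ) :
    ∀ k s n, Sq a b c r s n k = Rr a b c (r+s) n k := by
  intro k
  induction k with
  | zero =>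
    intro s n
    rw [Sq, Finset.HasAntidiagonal.antidiagonal_zero, Finset.sum_singleton]
    simp only [Rr_k0]
    rcases Nat.eq_zero_or_pos n with rfl | hn
    · simp
    · rw [if_neg (by omega)]
      apply Finset.sum_eq_zero
      intro q hq
      simp only [Finset.HasAntidiagonal.mem_antidiagonal] at hq
      rcases Nat.eq_zero_or_pos q.1 with h1 | h1
      · rw [if_neg (show ¬(q.2 = 0) by omega)]; ring
      · rw [if_neg (show ¬(q.1 = 0) by omega)]; ring
  | succ k ih =>
    intro s
    induction s with
    | zero =>
      intro n
      rw [Sq, Finset.Nat.sum_antidiagonal_succ']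
      have h1 : ∑ q ∈ Finset.HasAntidiagonal.antidiagonal n, Rr a b c r q.1 (k+1) * Rr a b c 0 q.2 0
          = Rr a b c r n (k+1) := by
        simp only [Rr_k0]
        exact sum_delta_right n (fun m => Rr a b c r m (k+1))
      have h2 : ∀ p ∈ Finset.HasAntidiagonal.antidiagonal k,
          ∑ q ∈ Finset.HasAntidiagonal.antidiagonal n, Rr a b c r q.1 p.1 * Rr a b c 0 q.2 (p.2+1) = 0 := by
        intro p _
        apply Finset.sum_eq_zero
        intro q _
        rw [Rr_r0 a b c _ _ (Nat.succ_ne_zero p.2)]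
        ring
      rw [h1, Finset.sum_congr rfl h2, Finset.sum_const, smul_zero, add_zero]
      norm_num
    | succ s ihs =>
      intro n
      rw [Sq, Finset.Nat.sum_antidiagonal_succ']
      -- first piece
      have h1 : ∑ q ∈ Finset.HasAntidiagonal.antidiagonal n, Rr a b c r q.1 (k+1) * Rr a b c (s+1) q.2 0
          = Rr a b c r n (k+1) := by
        simp only [Rr_k0]
        exact sum_delta_right n (fun m => Rr a b c r m (k+1))
      rw [h1]
      -- expand the recurrence inside
      have h2 : ∀ p ∈ Finset.HasAntidiagonal.antidiagonal k,
          ∑ q ∈ Finset.HasAntidiagonal.antidiagonal n, Rr a b c r q.1 p.1 * Rr a b c (s+1) q.2 (p.2+1)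
          = (∑ q ∈ Finset.HasAntidiagonal.antidiagonal n, Rr a b c r q.1 p.1 * Rr a b c s q.2 (p.2+1))
            + ∑ q ∈ Finset.HasAntidiagonal.antidiagonal n, ∑ j ∈ Icc 1 q.2,
                Rr a b c r q.1 p.1 * (c j * Rr a b c (s + (b-1) + a*j) (q.2-j) p.2) := by
        intro p _
        rw [← Finset.sum_add_distrib]
        refine Finset.sum_congr rfl (fun q _ => ?_)
        rw [Rr_rec a b ha hb c s q.2 p.2, mul_add, Finset.mul_sum]
      rw [Finset.sum_congr rfl h2, Finset.sum_add_distrib]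
      -- reassemble Sq r s n (k+1)
      have h3 : Rr a b c r n (k+1)
            + ∑ p ∈ Finset.HasAntidiagonal.antidiagonal k, ∑ q ∈ Finset.HasAntidiagonal.antidiagonal n,
                Rr a b c r q.1 p.1 * Rr a b c s q.2 (p.2+1)
          = Sq a b c r s n (k+1) := by
        rw [Sq, Finset.Nat.sum_antidiagonal_succ']
        congr 1
        simp only [Rr_k0]
        exact (sum_delta_right n (fun m => Rr a b c r m (k+1))).symm
      -- the j-part
      have h4 : ∑ p ∈ Finset.HasAntidiagonal.antidiagonal k, ∑ q ∈ Finset.HasAntidiagonal.antidiagonal n,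
            ∑ j ∈ Icc 1 q.2, Rr a b c r q.1 p.1 * (c j * Rr a b c (s + (b-1) + a*j) (q.2-j) p.2)
          = ∑ j ∈ Icc 1 n, c j * Rr a b c ((r+s) + (b-1) + a*j) (n-j) k := by
        have h5 : ∀ p ∈ Finset.HasAntidiagonal.antidiagonal k,
            ∑ q ∈ Finset.HasAntidiagonal.antidiagonal n, ∑ j ∈ Icc 1 q.2,
              Rr a b c r q.1 p.1 * (c j * Rr a b c (s + (b-1) + a*j) (q.2-j) p.2)
            = ∑ j ∈ Icc 1 n, ∑ q ∈ Finset.HasAntidiagonal.antidiagonal (n-j),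
              Rr a b c r q.1 p.1 * (c j * Rr a b c (s + (b-1) + a*j) q.2 p.2) := by
          intro p _
          exact tri n (fun q1 j q2 => Rr a b c r q1 p.1 * (c j * Rr a b c (s + (b-1) + a*j) q2 p.2))
        rw [Finset.sum_congr rfl h5, Finset.sum_comm]
        refine Finset.sum_congr rfl (fun j _ => ?_)
        have h6 : ∑ p ∈ Finset.HasAntidiagonal.antidiagonal k, ∑ q ∈ Finset.HasAntidiagonal.antidiagonal (n-j),
              Rr a b c r q.1 p.1 * (c j * Rr a b c (s + (b-1) + a*j) q.2 p.2)
            = c j * Sq a b c r (s + (b-1) + a*j) (n-j) k := by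
          rw [Sq, Finset.mul_sum]
          refine Finset.sum_congr rfl (fun p _ => ?_)
          rw [Finset.mul_sum]
          refine Finset.sum_congr rfl (fun q _ => ?_)
          ring
        rw [h6, ih]
        congr 2
        omega
      rw [← add_assoc, h3, h4, ihs n,
        show r+(s+1) = (r+s)+1 from rfl, Rr_rec a b ha hb c (r+s) n k]

lemma Rr_vanish (a b : ℕ) (c : ℕ → ℚ) (r : ℕ) {n k : ℕ} (hk : k ≠ 0) (h : n < k) :
    Rr a b c r n k = 0 := by
  rw [Rr, if_neg hk, Pc_eq_zero c h]; ring

lemma qc_eq_Rr (a b : ℕ) (c : ℕ → ℚ) (n : ℕ) {k : ℕ} (hk : 1 ≤ k) :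
    qc a b c n k = Rr a b c 1 n k := by
  obtain ⟨t, rfl⟩ := Nat.exists_eq_add_of_le hk
  rw [Nat.add_comm 1 t, qc, Rr, if_neg (Nat.succ_ne_zero t), Nat.add_sub_cancel,
    Nat.add_sub_cancel]
  set N : ℕ := a*n + (b-1)*(t+1) with hN
  have hid := Nat.add_one_mul_choose_eq N t
  have hid' : ((N:ℚ)+1) * (N.choose t : ℚ) = ((N+1).choose (t+1) : ℚ) * ((t:ℚ)+1) := by
    exact_mod_cast congrArg (Nat.cast : ℕ → ℚ) hid
  have h1 : ((N+1 : ℕ):ℚ) ≠ 0 := by positivity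
  have h2 : ((t:ℚ)+1) ≠ 0 := by positivity
  have h1' : ((N:ℚ)+1) ≠ 0 := by positivity
  push_cast at h1 ⊢
  field_simp
  linear_combination (- Pc c n (t+1)) * hid'

lemma conv_sum (a b : ℕ) (c : ℕ → ℚ) (n k : ℕ) (hn : 1 ≤ n) (hk : 2 ≤ k) :
    ∑ ℓ ∈ Finset.Icc 1 (k - 1), ∑ m ∈ Finset.Icc ℓ (n - 1),
        qc a b c (n - m) (k - ℓ) * qc a b c m ℓ
    = Sq a b c 1 1 n k - 2 * Rr a b c 1 n k := by
  have hSq : Sq a b c 1 1 n k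
      = ∑ ℓ ∈ Finset.range (k+1), ∑ m ∈ Finset.range (n+1),
          Rr a b c 1 m ℓ * Rr a b c 1 (n-m) (k-ℓ) := by
    rw [Sq, Finset.Nat.sum_antidiagonal_eq_sum_range_succ_mk]
    refine Finset.sum_congr rfl (fun ℓ _ => ?_)
    rw [Finset.Nat.sum_antidiagonal_eq_sum_range_succ_mk]
  have hIco : Finset.Ico 1 k = Finset.Icc 1 (k-1) := by
    ext x; simp only [Finset.mem_Ico, Finset.mem_Icc]; omega
  rw [hSq, Finset.sum_range_succ, Finset.range_eq_Ico,
    Finset.sum_eq_sum_Ico_succ_bot (by omega : 0 < k), hIco]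
  -- ℓ = 0 piece
  have hzero : ∑ m ∈ Finset.Ico 0 (n+1), Rr a b c 1 m 0 * Rr a b c 1 (n-m) (k-0)
      = Rr a b c 1 n k := by
    rw [← Finset.range_eq_Ico, Finset.sum_eq_single 0]
    · rw [Rr_k0, if_pos rfl, Nat.sub_zero, Nat.sub_zero]; ring
    · intro m _ hm
      rw [Rr_k0, if_neg hm]; ring
    · intro h; exact absurd (Finset.mem_range.mpr (by omega)) h
  -- ℓ = k piece
  have htop : ∑ m ∈ Finset.Ico 0 (n+1), Rr a b c 1 m k * Rr a b c 1 (n-m) (k-k)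
      = Rr a b c 1 n k := by
    rw [← Finset.range_eq_Ico, Finset.sum_eq_single n]
    · rw [Nat.sub_self, Nat.sub_self, Rr_k0, if_pos rfl]; ring
    · intro m hm hne
      rw [Finset.mem_range] at hm
      rw [Nat.sub_self, Rr_k0, if_neg (by omega)]; ring
    · intro h; exact absurd (Finset.mem_range.mpr (by omega)) h
  rw [Finset.range_eq_Ico, hzero, htop]
  -- middle piece
  have hmid : ∀ ℓ ∈ Finset.Icc 1 (k-1),
      ∑ m ∈ Finset.Ico 0 (n+1), Rr a b c 1 m ℓ * Rr a b c 1 (n-m) (k-ℓ)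
      = ∑ m ∈ Finset.Icc ℓ (n-1), qc a b c (n-m) (k-ℓ) * qc a b c m ℓ := by
    intro ℓ hℓ
    rw [Finset.mem_Icc] at hℓ
    rw [← Finset.range_eq_Ico]
    rw [← Finset.sum_subset (show Finset.Icc ℓ (n-1) ⊆ Finset.range (n+1) by
        intro x hx; rw [Finset.mem_Icc] at hx; rw [Finset.mem_range]; omega)]
    · refine Finset.sum_congr rfl (fun m hm => ?_)
      rw [Finset.mem_Icc] at hm
      rw [qc_eq_Rr a b c (n-m) (show 1 ≤ k - ℓ by omega),
        qc_eq_Rr a b c m (show 1 ≤ ℓ by omega)]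
      ring
    · intro m hm hnot
      rw [Finset.mem_range] at hm
      rw [Finset.mem_Icc] at hnot
      rcases Nat.lt_or_ge m ℓ with h | h
      · rw [Rr_vanish a b c 1 (by omega) h]; ring
      · have hmn : m = n := by omega
        subst hmn
        rw [Nat.sub_self, Rr_vanish a b c 1 (show k - ℓ ≠ 0 by omega) (by omega)]
        ring
  rw [Finset.sum_congr rfl hmid]
  ring

/-- Theorems 1 and 2: the convolution recurrence for the number of colored polygon
partitions into polygons with number of sides `≡ b (mod a)`. -/
theorem qc_recurrence (a b : ℕ) (ha : 1 ≤ a) (hb : 1 ≤ b) (c : ℕ → ℚ)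
    (n k : ℕ) (hn : 1 ≤ n) (hk : 2 ≤ k) :
    2 * ((k : ℚ) - 1) * qc a b c n k =
      ((a : ℚ) * n + ((b : ℚ) - 2) * k + 2) *
        ∑ ℓ ∈ Finset.Icc 1 (k - 1), ∑ m ∈ Finset.Icc ℓ (n - 1),
          qc a b c (n - m) (k - ℓ) * qc a b c m ℓ := by
  rcases Nat.lt_or_ge n k with hnk | hnk
  · -- degenerate case: everything vanishes
    have hR : ∀ ℓ ∈ Finset.Icc 1 (k-1), ∑ m ∈ Finset.Icc ℓ (n-1),
        qc a b c (n-m) (k-ℓ) * qc a b c m ℓ = 0 := by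
      intro ℓ hℓ
      rw [Finset.mem_Icc] at hℓ
      apply Finset.sum_eq_zero
      intro m hm
      rw [Finset.mem_Icc] at hm
      rw [qc, Pc_eq_zero c (show n - m < k - ℓ by omega)]
      ring
    rw [Finset.sum_congr rfl hR, Finset.sum_const, smul_zero, qc,
      Pc_eq_zero c hnk]
    ring
  · rw [conv_sum a b c n k hn hk, Sq_eq a b ha hb c 1 k 1 n,
      qc_eq_Rr a b c n (show 1 ≤ k by omega)]
    obtain ⟨t, rfl⟩ := Nat.exists_eq_add_of_le hk
    have han : 1*n ≤ a*n := Nat.mul_le_mul_right n ha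
    set N : ℕ := a*n + (b-1)*(2+t) with hN
    have e1 : a*n + (b-1)*(2+t) + 1 - 1 = N := by omega
    have e2 : a*n + (b-1)*(2+t) + 2 - 1 = N + 1 := by omega
    have e3 : (2+t) - 1 = t+1 := by omega
    rw [Rr, Rr, if_neg (by omega), if_neg (by omega), e1, e2, e3]
    have htN : t + 2 ≤ N := by omega
    have hPascal : ((N+1).choose (t+1) : ℚ) = (N.choose t : ℚ) + (N.choose (t+1) : ℚ) := by
      rw [Nat.choose_succ_succ]; push_cast; ring
    have hC : ((t:ℚ)+1) * (N.choose (t+1) : ℚ) = ((N:ℚ) - t) * (N.choose t : ℚ) := by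
      have h := Nat.choose_succ_right_eq N t
      have h2 : (N.choose (t+1) : ℚ) * ((t:ℚ)+1) = (N.choose t : ℚ) * ((N - t : ℕ) : ℚ) := by
        exact_mod_cast congrArg (Nat.cast : ℕ → ℚ) h
      rw [Nat.cast_sub (by omega)] at h2
      linarith [h2]
    have hNQ : (N:ℚ) = (a:ℚ)*n + ((b:ℚ)-1)*((2:ℚ)+t) := by
      rw [hN]; push_cast [Nat.cast_sub hb]; ring
    have hK : (a:ℚ) * n + ((b:ℚ) - 2) * ((2+t : ℕ):ℚ) + 2 = (N:ℚ) - t := by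
      push_cast
      rw [hNQ]; ring
    rw [hK, hPascal]
    have h2t : ((2+t : ℕ):ℚ) ≠ 0 := by positivity
    push_cast at h2t ⊢
    field_simp
    linear_combination (Pc c n (2+t)) * hC
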